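/- For a tree T on n vertices, the number of edges in the coloring graph C_k(T) equals (1/2)·Σ_{v∈V(T)} k·(k-1)^{n-deg(v)}·(k-2)^{deg(v)}. -/

import Mathlib

open SimpleGraph Finset

variable {V : Type}

lemma CGaux.leaf_not_mem_path_support {T : SimpleGraph V} {l w : V}
    (hl : ∀ u, T.Adj l u ↔ u = w) :
    ∀ {x y : V} (p : T.Walk x y), p.IsPath → x ≠ l → y ≠ l → l ∉ p.support := by
  intro x y p
  induction p with
  | nil => intro _ hx _; simp [Ne.symm hx]
  | @cons x b y a q ih =>
    intro hp hx hy
    rw [SimpleGraph.Walk.support_cons, List.mem_cons]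
    push_neg
    refine ⟨Ne.symm hx, ?_⟩
    by_cases hbl : b = l
    · subst hbl
      exfalso
      have hxw : x = w := (hl x).1 a.symm
      cases q with
      | nil => exact hy rfl
      | @cons _ b2 _ a2 q2 =>
        have hb2 : b2 = w := (hl b2).1 a2
        have hxin : x ∈ (SimpleGraph.Walk.cons a2 q2).support := by
          rw [SimpleGraph.Walk.support_cons, List.mem_cons, hxw, ← hb2]
          exact Or.inr (SimpleGraph.Walk.start_mem_support q2)
        have := (SimpleGraph.Walk.cons_isPath_iff a _).1 hp
        exact this.2 hxin
    · exact ih hp.of_cons hbl hy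

lemma CGaux.reachable_induce {T : SimpleGraph V} {s : Set V} :
    ∀ {x y : V} (p : T.Walk x y) (hx : x ∈ s) (hy : y ∈ s),
      (∀ z ∈ p.support, z ∈ s) → (T.induce s).Reachable ⟨x, hx⟩ ⟨y, hy⟩ := by
  intro x y p
  induction p with
  | nil => intro hx hy _; exact Reachable.refl _
  | @cons x b y a q ih =>
    intro hx hy h
    have hb : b ∈ s := h b (by simp [SimpleGraph.Walk.support_cons])
    have h1 : (T.induce s).Adj ⟨x, hx⟩ ⟨b, hb⟩ := a
    exact (h1.reachable).trans (ih hb hy (fun z hz => h z (by simp [SimpleGraph.Walk.support_cons, hz])))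

lemma CGaux.induce_isTree {T : SimpleGraph V} (hT : T.IsTree) {l w : V}
    (hl : ∀ u, T.Adj l u ↔ u = w) (hne : ∃ x : V, x ≠ l) :
    (T.induce {u | u ≠ l}).IsTree := by
  obtain ⟨x0, hx0⟩ := hne
  haveI : Nonempty ({u | u ≠ l} : Set V) := ⟨⟨x0, hx0⟩⟩
  constructor
  · constructor
    rintro ⟨x, hx⟩ ⟨y, hy⟩
    obtain ⟨p, hp⟩ := (hT.existsUnique_path x y).exists
    exact CGaux.reachable_induce p hx hy (fun z hz => by
      intro hzl; subst hzl
      exact CGaux.leaf_not_mem_path_support hl p hp hx hy hz)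
  · intro v c hc
    exact hT.IsAcyclic _ ((SimpleGraph.Walk.map_isCycle_iff_of_injective
      (f := (SimpleGraph.Embedding.induce {u | u ≠ l}).toHom) Subtype.val_injective).2 hc)

lemma CGaux.exists_leaf {V : Type} [Fintype V] (T : SimpleGraph V) (hT : T.IsTree)
    (h2 : 2 ≤ Fintype.card V) (v : V) :
    ∃ l w, l ≠ v ∧ ∀ u, T.Adj l u ↔ u = w := by
  classical
  have hdeg : ∀ u, 1 ≤ T.degree u := by
    intro u
    obtain ⟨u', hu'⟩ := Fintype.exists_ne_of_one_lt_card h2 u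
    obtain ⟨p⟩ := hT.isConnected.preconnected u u'
    have : 0 < T.degree u := by
      rw [SimpleGraph.degree_pos_iff_exists_adj]
      cases p with
      | nil => exact absurd rfl hu'
      | cons a q => exact ⟨_, a⟩
    omega
  have hsum : ∑ u, T.degree u = 2 * (Fintype.card V - 1) := by
    rw [SimpleGraph.sum_degrees_eq_twice_card_edges]
    have := hT.card_edgeFinset
    omega
  have hleaf : ∃ l, l ≠ v ∧ T.degree l = 1 := by
    by_contra hcon
    push_neg at hcon
    have h2' : ∀ l ∈ univ.erase v, 2 ≤ T.degree l := by
      intro l hl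
      rw [Finset.mem_erase] at hl
      have := hdeg l
      have := hcon l hl.1
      omega
    have hs2 : 2 * (Fintype.card V - 1) ≤ ∑ u ∈ univ.erase v, T.degree u := by
      calc 2 * (Fintype.card V - 1) = (univ.erase v).card * 2 := by
            rw [Finset.card_erase_of_mem (Finset.mem_univ v), Finset.card_univ]; ring
        _ ≤ ∑ u ∈ univ.erase v, T.degree u := Finset.card_nsmul_le_sum _ _ _ h2'
    have hsplit : ∑ u, T.degree u = T.degree v + ∑ u ∈ univ.erase v, T.degree u :=
      (Finset.add_sum_erase univ _ (Finset.mem_univ v)).symm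
    have := hdeg v
    omega
  obtain ⟨l, hlv, hdl⟩ := hleaf
  obtain ⟨w, hw⟩ := Finset.card_eq_one.1 hdl
  exact ⟨l, w, hlv, fun u => by rw [← SimpleGraph.mem_neighborFinset, hw, Finset.mem_singleton]⟩

abbrev CGaux.PairType (T : SimpleGraph V) (k : ℕ) (v : V) : Type :=
  {p : (V → Fin k) × Fin k //
    (∀ a b, T.Adj a b → p.1 a ≠ p.1 b) ∧ p.2 ≠ p.1 v ∧ ∀ u, T.Adj v u → p.2 ≠ p.1 u}

lemma CGaux.card_ne {k : ℕ} (a : Fin k) : Fintype.card {x : Fin k // x ≠ a} = k - 1 := by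
  rw [Fintype.card_subtype_compl, Fintype.card_subtype_eq, Fintype.card_fin]

lemma CGaux.card_ne_ne {k : ℕ} (a b : Fin k) (h : a ≠ b) :
    Fintype.card {x : Fin k // x ≠ a ∧ x ≠ b} = k - 2 := by
  classical
  have e : {x : Fin k // x ≠ a ∧ x ≠ b} ≃ {x : Fin k // ¬ x ∈ ({a, b} : Finset (Fin k))} :=
    Equiv.subtypeEquivRight (by intro x; simp [not_or])
  rw [Fintype.card_congr e, Fintype.card_subtype_compl, Fintype.card_fin, Fintype.card_coe,
    Finset.card_insert_of_notMem (by simpa using h), Finset.card_singleton]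

lemma CGaux.count_aux (k : ℕ) : ∀ (n : ℕ) (V : Type) (_inst : Fintype V) (T : SimpleGraph V),
    T.IsTree → Fintype.card V = n → ∀ v : V,
    Nat.card (CGaux.PairType T k v) =
      k * (k - 1) ^ (n - (T.neighborSet v).ncard) * (k - 2) ^ (T.neighborSet v).ncard := by
  intro n
  induction n with
  | zero =>
    intro V inst T hT hn v
    exact absurd hn (by have : 0 < Fintype.card V := Fintype.card_pos_iff.2 ⟨v⟩; omega)
  | succ n ih =>
    intro V inst T hT hn v
    classical
    by_cases h1 : n = 0
    · -- base case : one vertex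
      subst h1
      have hall : ∀ u : V, u = v := by
        have h := Fintype.card_le_one_iff.1 (by omega : Fintype.card V ≤ 1)
        intro u; exact h u v
      have hNv : T.neighborSet v = ∅ := by
        ext u
        simp only [mem_neighborSet, Set.mem_empty_iff_false, iff_false]
        intro h
        exact T.loopless.irrefl v (by rwa [hall u] at h)
      have e1 : CGaux.PairType T k v ≃ Σ f : V → Fin k, {c : Fin k // c ≠ f v} := by
        refine (Equiv.subtypeEquivRight ?_).trans
          (Equiv.subtypeProdEquivSigmaSubtype (fun (f : V → Fin k) (c : Fin k) => c ≠ f v))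
        intro p
        constructor
        · rintro ⟨-, h2, -⟩; exact h2
        · intro h
          refine ⟨fun a b hab => absurd (by rwa [hall a, hall b] at hab) (T.loopless.irrefl v), h, ?_⟩
          intro u hu
          exact absurd (by rwa [hall u] at hu) (T.loopless.irrefl v)
      rw [Nat.card_congr e1, Nat.card_eq_fintype_card, Fintype.card_sigma]
      simp only [CGaux.card_ne]
      rw [Finset.sum_const, Finset.card_univ, Fintype.card_fun, Fintype.card_fin, hn,
        hNv, Set.ncard_empty]
      simp [mul_comm]
    · -- inductive step
      obtain ⟨l, w, hlv, hw⟩ := CGaux.exists_leaf T hT (by omega) v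
      have hvl : v ≠ l := Ne.symm hlv
      have hwl : w ≠ l := by
        intro h
        exact T.loopless.irrefl l (by rw [← h] at hw ⊢; exact (hw w).2 rfl)
      set s : Set V := {u | u ≠ l} with hs
      have hvs : v ∈ s := hvl
      have hws : w ∈ s := hwl
      set T' : SimpleGraph s := T.induce s with hT'def
      have hT' : T'.IsTree := CGaux.induce_isTree hT hw ⟨v, hvl⟩
      set v' : s := (⟨v, hvs⟩ : s) with hv'def
      have hcard' : Fintype.card s = n := by
        have h1 : Fintype.card s = Fintype.card V - Fintype.card {u : V // u = l} :=
          Fintype.card_subtype_compl _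
        rw [Fintype.card_subtype_eq] at h1
        omega
      have hadj' : ∀ (a b : s), T'.Adj a b ↔ T.Adj a.1 b.1 := fun a b => Iff.rfl
      -- the restriction map
      set π : CGaux.PairType T k v → CGaux.PairType T' k v' := fun p =>
        ⟨(fun u => p.1.1 u.1, p.1.2),
          fun a b hab => p.2.1 a.1 b.1 hab,
          p.2.2.1,
          fun u hu => p.2.2.2 u.1 hu⟩ with hπdef
      have hπf : ∀ (p : CGaux.PairType T k v) (q : CGaux.PairType T' k v'), π p = q →
          ∀ u : s, p.1.1 u.1 = q.1.1 u := by
        rintro p q rfl u; rfl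
      have hπc : ∀ (p : CGaux.PairType T k v) (q : CGaux.PairType T' k v'), π p = q →
          p.1.2 = q.1.2 := by
        rintro p q rfl; rfl
      -- the image of the neighbor set
      have himg : Subtype.val '' (T'.neighborSet v') = T.neighborSet v \ {l} := by
        ext u
        constructor
        · rintro ⟨⟨u1, hu1⟩, hadj, rfl⟩
          exact ⟨hadj, hu1⟩
        · rintro ⟨hadj, hul⟩
          exact ⟨⟨u, hul⟩, hadj, rfl⟩
      have hd' : (T'.neighborSet v').ncard = (T.neighborSet v \ {l}).ncard := by
        rw [← himg, Set.ncard_image_of_injective _ Subtype.val_injective]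
      haveI : Fintype (CGaux.PairType T k v) := Fintype.ofFinite _
      haveI : Fintype (CGaux.PairType T' k v') := Fintype.ofFinite _
      haveI : ∀ q : CGaux.PairType T' k v', Fintype {p : CGaux.PairType T k v // π p = q} :=
        fun q => Fintype.ofFinite _
      by_cases hvw : w = v
      · -- case B : the leaf is attached to v
        have hadj_vl : T.Adj v l := ((hw v).2 hvw.symm).symm
        have hlmem : l ∈ T.neighborSet v := hadj_vl
        have hd1 : 1 ≤ (T.neighborSet v).ncard := by
          rw [Nat.one_le_iff_ne_zero, Ne, Set.ncard_eq_zero (Set.toFinite _)]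
          intro h; rw [h] at hlmem; exact hlmem
        have hdB : (T'.neighborSet v').ncard = (T.neighborSet v).ncard - 1 := by
          rw [hd', Set.ncard_diff_singleton_of_mem hlmem]
        have E : ∀ q : CGaux.PairType T' k v',
            {p : CGaux.PairType T k v // π p = q} ≃
              {x : Fin k // x ≠ q.1.1 v' ∧ x ≠ q.1.2} := by
          intro q
          refine ⟨fun p => ⟨p.1.1.1 l, ?_, ?_⟩, fun x => ⟨⟨(fun u => if h : u = l then x.1
            else q.1.1 ⟨u, h⟩, q.1.2), ?_, ?_, ?_⟩, ?_⟩, ?_, ?_⟩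
          · rw [← hπf p.1 q p.2 v']
            exact p.1.2.1 l v ((hw v).2 hvw.symm)
          · rw [← hπc p.1 q p.2]
            exact fun h => p.1.2.2.2 l hadj_vl h.symm
          · intro a b hab
            by_cases ha : a = l
            · by_cases hb : b = l
              · exact absurd (by rw [ha, hb] at hab; exact hab) (T.loopless.irrefl l)
              · simp only [dif_pos ha, dif_neg hb]
                have hbw : b = w := (hw b).1 (by rwa [ha] at hab)
                have hbv : (⟨b, hb⟩ : s) = v' := Subtype.ext (hbw.trans hvw)
                exact fun hEq => x.2.1 (hEq.trans (congrArg q.1.1 hbv))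
            · by_cases hb : b = l
              · simp only [dif_neg ha, dif_pos hb]
                have haw : a = w := (hw a).1 (by rw [hb] at hab; exact hab.symm)
                have hav : (⟨a, ha⟩ : s) = v' := Subtype.ext (haw.trans hvw)
                exact fun hEq => x.2.1 (hEq.symm.trans (congrArg q.1.1 hav))
              · simp only [dif_neg ha, dif_neg hb]
                exact q.2.1 ⟨a, ha⟩ ⟨b, hb⟩ hab
          · simp only [dif_neg hvl]
            exact q.2.2.1
          · intro u hu
            by_cases hul : u = l
            · simp only [dif_pos hul]
              exact fun h => x.2.2 h.symm
            · simp only [dif_neg hul]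
              exact q.2.2.2 ⟨u, hul⟩ hu
          · apply Subtype.ext
            apply Prod.ext
            · funext u
              exact dif_neg (u.2 : u.1 ≠ l)
            · rfl
          · rintro ⟨p, hp⟩
            apply Subtype.ext
            apply Subtype.ext
            apply Prod.ext
            · funext u
              by_cases hul : u = l
              · simp only [dif_pos hul]; rw [hul]
              · simp only [dif_neg hul]
                exact (hπf p q hp ⟨u, hul⟩).symm
            · exact (hπc p q hp).symm
          · intro x
            apply Subtype.ext
            exact dif_pos rfl
        have hfib : ∀ q : CGaux.PairType T' k v',
            Fintype.card {p : CGaux.PairType T k v // π p = q} = k - 2 := by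
          intro q
          rw [Fintype.card_congr (E q), CGaux.card_ne_ne _ _ (Ne.symm q.2.2.1)]
        have hkey : Nat.card (CGaux.PairType T k v) =
            Nat.card (CGaux.PairType T' k v') * (k - 2) := by
          rw [Nat.card_congr (Equiv.sigmaFiberEquiv π).symm, Nat.card_eq_fintype_card,
            Fintype.card_sigma]
          simp only [hfib]
          rw [Finset.sum_const, Finset.card_univ, smul_eq_mul, Nat.card_eq_fintype_card]
        rw [hkey, ih s (Subtype.fintype _) T' hT' hcard' v', hdB]
        obtain ⟨d₀, hd₀⟩ : ∃ d₀, (T.neighborSet v).ncard = d₀ + 1 :=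
          ⟨(T.neighborSet v).ncard - 1, by omega⟩
        rw [hd₀]
        have h2 : n + 1 - (d₀ + 1) = n - d₀ := by omega
        have h3 : d₀ + 1 - 1 = d₀ := by omega
        rw [h2, h3, pow_succ]
        ring
      · -- case A : the leaf is not attached to v
        have hnadj : l ∉ T.neighborSet v := by
          intro h
          exact hvw ((hw v).1 (SimpleGraph.Adj.symm h)).symm
        have hdA : (T'.neighborSet v').ncard = (T.neighborSet v).ncard := by
          rw [hd', Set.diff_singleton_eq_self hnadj]
        have hdn : (T.neighborSet v).ncard ≤ n := by
          have hss : T.neighborSet v ⊂ Set.univ := by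
            rw [Set.ssubset_univ_iff]
            intro h
            exact T.loopless.irrefl v (by rw [← SimpleGraph.mem_neighborSet, h]; trivial)
          have := Set.ncard_lt_ncard hss (Set.toFinite _)
          rw [Set.ncard_univ, Nat.card_eq_fintype_card, hn] at this
          omega
        have E : ∀ q : CGaux.PairType T' k v',
            {p : CGaux.PairType T k v // π p = q} ≃
              {x : Fin k // x ≠ q.1.1 ⟨w, hws⟩} := by
          intro q
          refine ⟨fun p => ⟨p.1.1.1 l, ?_⟩, fun x => ⟨⟨(fun u => if h : u = l then x.1
            else q.1.1 ⟨u, h⟩, q.1.2), ?_, ?_, ?_⟩, ?_⟩, ?_, ?_⟩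
          · rw [← hπf p.1 q p.2 ⟨w, hws⟩]
            exact p.1.2.1 l w ((hw w).2 rfl)
          · intro a b hab
            by_cases ha : a = l
            · by_cases hb : b = l
              · exact absurd (by rw [ha, hb] at hab; exact hab) (T.loopless.irrefl l)
              · simp only [dif_pos ha, dif_neg hb]
                have hbw : b = w := (hw b).1 (by rwa [ha] at hab)
                have hbv : (⟨b, hb⟩ : s) = ⟨w, hws⟩ := Subtype.ext hbw
                exact fun hEq => x.2 (hEq.trans (congrArg q.1.1 hbv))
            · by_cases hb : b = l
              · simp only [dif_neg ha, dif_pos hb]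
                have haw : a = w := (hw a).1 (by rw [hb] at hab; exact hab.symm)
                have hav : (⟨a, ha⟩ : s) = ⟨w, hws⟩ := Subtype.ext haw
                exact fun hEq => x.2 (hEq.symm.trans (congrArg q.1.1 hav))
              · simp only [dif_neg ha, dif_neg hb]
                exact q.2.1 ⟨a, ha⟩ ⟨b, hb⟩ hab
          · simp only [dif_neg hvl]
            exact q.2.2.1
          · intro u hu
            by_cases hul : u = l
            · exact absurd (show l ∈ T.neighborSet v by rwa [hul] at hu) hnadj
            · simp only [dif_neg hul]
              exact q.2.2.2 ⟨u, hul⟩ hu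
          · apply Subtype.ext
            apply Prod.ext
            · funext u
              exact dif_neg (u.2 : u.1 ≠ l)
            · rfl
          · rintro ⟨p, hp⟩
            apply Subtype.ext
            apply Subtype.ext
            apply Prod.ext
            · funext u
              by_cases hul : u = l
              · simp only [dif_pos hul]; rw [hul]
              · simp only [dif_neg hul]
                exact (hπf p q hp ⟨u, hul⟩).symm
            · exact (hπc p q hp).symm
          · intro x
            apply Subtype.ext
            exact dif_pos rfl
        have hfib : ∀ q : CGaux.PairType T' k v',
            Fintype.card {p : CGaux.PairType T k v // π p = q} = k - 1 := by
          intro q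
          rw [Fintype.card_congr (E q), CGaux.card_ne]
        have hkey : Nat.card (CGaux.PairType T k v) =
            Nat.card (CGaux.PairType T' k v') * (k - 1) := by
          rw [Nat.card_congr (Equiv.sigmaFiberEquiv π).symm, Nat.card_eq_fintype_card,
            Fintype.card_sigma]
          simp only [hfib]
          rw [Finset.sum_const, Finset.card_univ, smul_eq_mul, Nat.card_eq_fintype_card]
        rw [hkey, ih s (Subtype.fintype _) T' hT' hcard' v', hdA]
        have h2 : n + 1 - (T.neighborSet v).ncard = (n - (T.neighborSet v).ncard) + 1 := by
          omega
        rw [h2, pow_succ]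
        ring

/-- The `k`-coloring graph of `G`: vertices are proper `k`-colorings of `G`, and two
colorings are adjacent iff they differ at exactly one vertex. -/
def coloringGraph {V : Type} (G : SimpleGraph V) (k : ℕ) :
    SimpleGraph {f : V → Fin k // ∀ u w, G.Adj u w → f u ≠ f w} :=
  SimpleGraph.fromRel (fun f g => ∃ v, ∀ u, u ≠ v → f.1 u = g.1 u)

/-- For a tree `T` on `n` vertices, the number of edges of the coloring graph `C_k(T)`
equals `(1/2)·Σ_{v} k·(k-1)^{n-deg v}·(k-2)^{deg v}` (stated multiplied through by 2). -/
theorem tree_coloring_graph_edge_count {V : Type} [Fintype V] (T : SimpleGraph V)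
    (hT : T.IsTree) (n : ℕ) (hn : Fintype.card V = n) (k : ℕ) :
    2 * ((coloringGraph T k).edgeSet.ncard) =
      ∑ v : V, k * (k - 1) ^ (n - (T.neighborSet v).ncard) *
        (k - 2) ^ (T.neighborSet v).ncard := by
  classical
  set G := coloringGraph T k with hG
  haveI : Fintype {f : V → Fin k // ∀ u w, T.Adj u w → f u ≠ f w} := Fintype.ofFinite _
  haveI : DecidableRel G.Adj := Classical.decRel _
  haveI : Fintype G.edgeSet := Fintype.ofFinite _
  have exdiff : ∀ d : G.Dart, ∃ x, d.fst.1 x ≠ d.snd.1 x := by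
    intro d
    by_contra hcon
    push_neg at hcon
    exact d.adj.ne (Subtype.ext (funext hcon))
  set diffv : G.Dart → V := fun d => Classical.choose (exdiff d) with hdiffv
  haveI : ∀ v : V, Fintype {d : G.Dart // diffv d = v} := fun _ => Fintype.ofFinite _
  have hdiff1 : ∀ d : G.Dart, d.fst.1 (diffv d) ≠ d.snd.1 (diffv d) :=
    fun d => Classical.choose_spec (exdiff d)
  have hdiff2 : ∀ (d : G.Dart) (u : V), u ≠ diffv d → d.fst.1 u = d.snd.1 u := by
    intro d u hu
    have hadj := d.adj
    simp only [hG, coloringGraph, SimpleGraph.fromRel_adj] at hadj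
    obtain ⟨hne, h | h⟩ := hadj <;> obtain ⟨v₀, hv₀⟩ := h
    · have hv : diffv d = v₀ := by
        by_contra hne2
        exact hdiff1 d (hv₀ _ hne2)
      exact hv₀ u (by rwa [hv] at hu)
    · have hv : diffv d = v₀ := by
        by_contra hne2
        exact hdiff1 d (hv₀ _ hne2).symm
      exact (hv₀ u (by rwa [hv] at hu)).symm
  have h0 : 2 * G.edgeSet.ncard = Fintype.card G.Dart := by
    rw [Set.ncard_eq_toFinset_card', Set.toFinset_card, ← SimpleGraph.edgeFinset_card,
      G.dart_card_eq_twice_card_edges]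
    congr!
  have hcard : Fintype.card G.Dart = ∑ v : V, Fintype.card {d : G.Dart // diffv d = v} := by
    have h := Fintype.card_congr (Equiv.sigmaFiberEquiv diffv)
    rw [Fintype.card_sigma] at h
    exact h.symm
  have key : ∀ v : V, ∀ p : (V → Fin k) × Fin k,
      ((∀ a b, T.Adj a b → p.1 a ≠ p.1 b) ∧ p.2 ≠ p.1 v ∧ ∀ u, T.Adj v u → p.2 ≠ p.1 u) →
      ∀ a b, T.Adj a b → Function.update p.1 v p.2 a ≠ Function.update p.1 v p.2 b := by
    rintro v ⟨f, c⟩ ⟨h1, h2, h3⟩ a b hab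
    by_cases hav : a = v
    · have hbv : b ≠ v := fun h => T.loopless.irrefl v (by rw [hav, h] at hab; exact hab)
      rw [hav, Function.update_self, Function.update_of_ne hbv]
      exact fun h => h3 b (hav ▸ hab) h
    · by_cases hbv : b = v
      · rw [hbv, Function.update_self, Function.update_of_ne hav]
        exact fun h => h3 a (hbv ▸ hab).symm h.symm
      · rw [Function.update_of_ne hav, Function.update_of_ne hbv]
        exact h1 a b hab
  have hEv : ∀ v : V,
      Fintype.card {d : G.Dart // diffv d = v} = Nat.card (CGaux.PairType T k v) := by
    intro v
    rw [← Nat.card_eq_fintype_card]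
    apply Nat.card_congr
    refine Equiv.ofBijective (fun d => ⟨(d.1.fst.1, d.1.snd.1 v), d.1.fst.2, ?_, ?_⟩) ⟨?_, ?_⟩
    · have h := hdiff1 d.1
      rw [d.2] at h
      exact Ne.symm h
    · intro u hu
      have huv : u ≠ v := fun he => T.loopless.irrefl v (by rw [he] at hu; exact hu)
      intro h
      exact d.1.snd.2 v u hu (h.trans (hdiff2 d.1 u (by rw [d.2]; exact huv)))
    · rintro ⟨d1, hd1⟩ ⟨d2, hd2⟩ hEq
      have hfst : d1.fst.1 = d2.fst.1 := congrArg (fun z => z.1.1) hEq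
      have hsndv : d1.snd.1 v = d2.snd.1 v := congrArg (fun z => z.1.2) hEq
      have hsnd : d1.snd.1 = d2.snd.1 := by
        funext u
        by_cases huv : u = v
        · rw [huv]; exact hsndv
        · rw [← hdiff2 d1 u (by rwa [hd1]), ← hdiff2 d2 u (by rwa [hd2]), hfst]
      apply Subtype.ext
      apply SimpleGraph.Dart.ext
      apply Prod.ext
      · exact Subtype.ext hfst
      · exact Subtype.ext hsnd
    · rintro ⟨⟨f, c⟩, hp1, hp2, hp3⟩
      have hgproper := key v (f, c) ⟨hp1, hp2, hp3⟩
      have hadj : G.Adj ⟨f, hp1⟩ ⟨Function.update f v c, hgproper⟩ := by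
        rw [hG, coloringGraph, SimpleGraph.fromRel_adj]
        constructor
        · intro hEq
          have h := congrArg (fun z => z.1 v) hEq
          simp only [Function.update_self] at h
          exact hp2 h.symm
        · exact Or.inl ⟨v, fun u hu => (Function.update_of_ne hu _ _).symm⟩
      set d0 : G.Dart := ⟨(⟨f, hp1⟩, ⟨Function.update f v c, hgproper⟩), hadj⟩ with hd0
      have hdv : diffv d0 = v := by
        by_contra hne2
        apply hdiff1 d0
        show f (diffv d0) = Function.update f v c (diffv d0)
        rw [Function.update_of_ne hne2]
      refine ⟨⟨d0, hdv⟩, ?_⟩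
      apply Subtype.ext
      show (f, Function.update f v c v) = (f, c)
      rw [Function.update_self]
  rw [h0, hcard]
  refine Finset.sum_congr rfl (fun v _ => ?_)
  rw [hEv v, CGaux.count_aux k n V ‹Fintype V› T hT hn v]
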